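/- Fix β > 0 and γ > 0, and for ρ > 0 write g := g(β,ρ) and F(ρ) := f(γ,β,ρ). Then F is differentiable at every ρ > 0, with derivative F'(ρ) = F(ρ)² · (2·(1/g + 1) / (1 + (ρ/β)·(1+g)²)²) · (ρ/β − 1/γ) · g'(ρ), where g'(ρ) = −g·(1+g)²/(β + ρ·(1+g)²). -/

import Mathlib

/-- The deterministic equivalent `g(β,ρ)`: the unique positive solution of
`g·(ρ + β/(1+g)) = 1`, given in closed form. -/
noncomputable def gfun (β ρ : ℝ) : ℝ :=
  ((1 - ρ - β) + Real.sqrt ((ρ + β - 1) ^ 2 + 4 * ρ)) / (2 * ρ)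

/-- The limiting SINR coefficient `f(γ,β,ρ)` at effective SNR γ. -/
noncomputable def ffun (γ β ρ : ℝ) : ℝ :=
  gfun β ρ * (γ + (γ * ρ / β) * (1 + gfun β ρ) ^ 2) / (γ + (1 + gfun β ρ) ^ 2)

/-- Algebraic identity for the derivative of `g`. -/
lemma alg1 (ρ β g : ℝ) (hρ : 0 < ρ) (hβ : 0 < β) (hg : 0 < g)
    (hkey : g * (ρ * (1 + g)) + g * β = 1 + g) :
    ((-1 + (2 * (ρ + β - 1) + 4) / (2 * (2 * ρ * g + ρ + β - 1))) * (2 * ρ)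
        - ((1 - ρ - β) + (2 * ρ * g + ρ + β - 1)) * 2) / (2 * ρ) ^ 2
      = -(g * (1 + g) ^ 2) / (β + ρ * (1 + g) ^ 2) := by
  have h1g : (0:ℝ) < 1 + g := by linarith
  have hβeq : β = (1 + g) * (1 - g * ρ) / g := by
    field_simp
    linarith [hkey]
  subst hβeq
  have e1 : 2 * ρ * g + ρ + (1 + g) * (1 - g * ρ) / g - 1 = (ρ * g ^ 2 + 1) / g := by
    field_simp; ring
  have e2 : (1 + g) * (1 - g * ρ) / g + ρ * (1 + g) ^ 2 = (1 + g) * (1 + ρ * g ^ 2) / g := by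
    field_simp; ring
  rw [e1, e2]
  have h2 : (0:ℝ) < ρ * g ^ 2 + 1 := by positivity
  have h3 : (0:ℝ) < 1 + ρ * g ^ 2 := by positivity
  field_simp
  ring

lemma gfun_pos (β ρ : ℝ) (hβ : 0 < β) (hρ : 0 < ρ) : 0 < gfun β ρ := by
  have hq : (0:ℝ) < (ρ + β - 1) ^ 2 + 4 * ρ := by positivity
  have hs0 := Real.sqrt_nonneg ((ρ + β - 1) ^ 2 + 4 * ρ)
  have hs2 : Real.sqrt ((ρ + β - 1) ^ 2 + 4 * ρ) ^ 2 = (ρ + β - 1) ^ 2 + 4 * ρ :=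
    Real.sq_sqrt hq.le
  have hnum : 0 < (1 - ρ - β) + Real.sqrt ((ρ + β - 1) ^ 2 + 4 * ρ) := by
    nlinarith [hs2, hs0]
  unfold gfun
  positivity

lemma gfun_key (β ρ : ℝ) (hβ : 0 < β) (hρ : 0 < ρ) :
    gfun β ρ * (ρ * (1 + gfun β ρ)) + gfun β ρ * β = 1 + gfun β ρ := by
  have hq : (0:ℝ) < (ρ + β - 1) ^ 2 + 4 * ρ := by positivity
  have hs2 : Real.sqrt ((ρ + β - 1) ^ 2 + 4 * ρ) ^ 2 = (ρ + β - 1) ^ 2 + 4 * ρ :=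
    Real.sq_sqrt hq.le
  have hseq : Real.sqrt ((ρ + β - 1) ^ 2 + 4 * ρ) = 2 * ρ * gfun β ρ + ρ + β - 1 := by
    unfold gfun; field_simp; ring
  rw [hseq] at hs2
  have h4 : (4:ℝ) * ρ * (gfun β ρ * (ρ * (1 + gfun β ρ)) + gfun β ρ * β)
      = 4 * ρ * (1 + gfun β ρ) := by linear_combination hs2
  exact mul_left_cancel₀ (by positivity : (4:ℝ) * ρ ≠ 0) h4

lemma gfun_hasDerivAt (β ρ : ℝ) (hβ : 0 < β) (hρ : 0 < ρ) :
    HasDerivAt (gfun β)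
      (-(gfun β ρ * (1 + gfun β ρ) ^ 2) / (β + ρ * (1 + gfun β ρ) ^ 2)) ρ := by
  have hq : (0:ℝ) < (ρ + β - 1) ^ 2 + 4 * ρ := by positivity
  have hs_pos : 0 < Real.sqrt ((ρ + β - 1) ^ 2 + 4 * ρ) := Real.sqrt_pos.2 hq
  have hqd : HasDerivAt (fun r : ℝ => (r + β - 1) ^ 2 + 4 * r)
      (2 * (ρ + β - 1) ^ 1 * 1 + 4) ρ := by
    have h1 : HasDerivAt (fun r : ℝ => r + β - 1) 1 ρ := by
      simpa using ((hasDerivAt_id ρ).add_const β).sub_const 1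
    refine ((h1.pow 2).add ((hasDerivAt_id ρ).const_mul 4)).congr_deriv ?_
    norm_num
  have hsd : HasDerivAt (fun r : ℝ => Real.sqrt ((r + β - 1) ^ 2 + 4 * r))
      ((2 * (ρ + β - 1) ^ 1 * 1 + 4) / (2 * Real.sqrt ((ρ + β - 1) ^ 2 + 4 * ρ))) ρ :=
    hqd.sqrt hq.ne'
  have hnum : HasDerivAt (fun r : ℝ => (1 - r - β) + Real.sqrt ((r + β - 1) ^ 2 + 4 * r))
      (-1 + (2 * (ρ + β - 1) ^ 1 * 1 + 4) / (2 * Real.sqrt ((ρ + β - 1) ^ 2 + 4 * ρ))) ρ := by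
    have : HasDerivAt (fun r : ℝ => 1 - r - β) (-1) ρ := by
      simpa using (((hasDerivAt_id ρ).const_sub 1).sub_const β)
    exact this.add hsd
  have hden : HasDerivAt (fun r : ℝ => 2 * r) 2 ρ := by
    simpa using (hasDerivAt_id ρ).const_mul 2
  have hdiv := hnum.div hden (by positivity : 2 * ρ ≠ 0)
  have hg := gfun_pos β ρ hβ hρ
  have hkey := gfun_key β ρ hβ hρ
  have hseq : Real.sqrt ((ρ + β - 1) ^ 2 + 4 * ρ) = 2 * ρ * gfun β ρ + ρ + β - 1 := by
    unfold gfun; field_simp; ring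
  rw [hseq] at hdiv
  refine hdiv.congr_deriv (Eq.symm ?_)
  rw [← alg1 ρ β (gfun β ρ) hρ hβ hg hkey]
  ring_nf

/-- Algebraic identity for the derivative of `f`. -/
lemma alg2 (ρ β γ g : ℝ) (hρ : 0 < ρ) (hβ : 0 < β) (hγ : 0 < γ) (hg : 0 < g)
    (hkey : g * (ρ * (1 + g)) + g * β = 1 + g) :
    (g * (γ + γ * ρ / β * (1 + g) ^ 2) / (γ + (1 + g) ^ 2)) ^ 2 *
        (2 * (1 / g + 1) / (1 + ρ / β * (1 + g) ^ 2) ^ 2) * (ρ / β - 1 / γ) *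
        (-(g * (1 + g) ^ 2) / (β + ρ * (1 + g) ^ 2)) =
    ((-(g * (1 + g) ^ 2) / (β + ρ * (1 + g) ^ 2) * (γ + γ * ρ / β * (1 + g) ^ 2) +
        g * (γ * 1 / β * (1 + g) ^ 2 +
          γ * ρ / β * (2 * (1 + g) ^ 1 * (-(g * (1 + g) ^ 2) / (β + ρ * (1 + g) ^ 2))))) *
        (γ + (1 + g) ^ 2) -
      g * (γ + γ * ρ / β * (1 + g) ^ 2) *
        (2 * (1 + g) ^ 1 * (-(g * (1 + g) ^ 2) / (β + ρ * (1 + g) ^ 2)))) /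
      (γ + (1 + g) ^ 2) ^ 2 := by
  have h1g : (0:ℝ) < 1 + g := by linarith
  have hfac : (1 + g) * (1 - g * ρ) = g * β := by linear_combination -hkey
  have h1mg : (0:ℝ) < 1 - g * ρ := by nlinarith [mul_pos hg hβ]
  have hβeq : β = (1 + g) * (1 - g * ρ) / g := by
    field_simp
    linear_combination -hfac
  subst hβeq
  have e2 : (1 + g) * (1 - g * ρ) / g + ρ * (1 + g) ^ 2 = (1 + g) * (1 + ρ * g ^ 2) / g := by
    field_simp; ring
  have e3 : 1 + ρ / ((1 + g) * (1 - g * ρ) / g) * (1 + g) ^ 2 = (1 + ρ * g ^ 2) / (1 - g * ρ) := by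
    have h1mg' : 1 - ρ * g ≠ 0 := by rw [mul_comm]; exact h1mg.ne'
    field_simp; ring
  rw [e2, e3]
  have h2 : (0:ℝ) < 1 + ρ * g ^ 2 := by positivity
  have h3 : γ + (1 + g) ^ 2 ≠ 0 := by positivity
  field_simp
  ring

/-- Fix β > 0 and γ > 0, and write g := g(β,ρ),
F(ρ) := f(γ,β,ρ). Then F is differentiable at every ρ > 0 with derivative
F'(ρ) = F(ρ)²·(2·(1/g+1)/(1+(ρ/β)(1+g)²)²)·(ρ/β − 1/γ)·g'(ρ), where
g'(ρ) = −g·(1+g)²/(β+ρ·(1+g)²). -/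
theorem ffun_hasDerivAt (β γ : ℝ) (hβ : 0 < β) (hγ : 0 < γ)
    (ρ : ℝ) (hρ : 0 < ρ) :
    HasDerivAt (fun r => ffun γ β r)
      ((ffun γ β ρ) ^ 2 *
        (2 * (1 / gfun β ρ + 1) / (1 + (ρ / β) * (1 + gfun β ρ) ^ 2) ^ 2) *
        (ρ / β - 1 / γ) *
        (-(gfun β ρ * (1 + gfun β ρ) ^ 2) / (β + ρ * (1 + gfun β ρ) ^ 2))) ρ := by
  have hg := gfun_pos β ρ hβ hρ
  have hkey := gfun_key β ρ hβ hρ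
  have hgd := gfun_hasDerivAt β ρ hβ hρ
  have hlin : HasDerivAt (fun r : ℝ => γ * r / β) (γ * 1 / β) ρ :=
    ((hasDerivAt_id ρ).const_mul γ).div_const β
  have h1g2 : HasDerivAt (fun r : ℝ => (1 + gfun β r) ^ 2)
      (2 * (1 + gfun β ρ) ^ 1 *
        (-(gfun β ρ * (1 + gfun β ρ) ^ 2) / (β + ρ * (1 + gfun β ρ) ^ 2))) ρ :=
    (hgd.const_add 1).pow 2
  have hA := hlin.mul h1g2
  have hN := hgd.mul (hA.const_add γ)
  have hD := h1g2.const_add γ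
  have hden_ne : γ + (1 + gfun β ρ) ^ 2 ≠ 0 := by positivity
  have hF := hN.div hD hden_ne
  have heq : (fun r => ffun γ β r)
      = fun r => gfun β r * (γ + γ * r / β * (1 + gfun β r) ^ 2) / (γ + (1 + gfun β r) ^ 2) := by
    funext r; rw [ffun]
  rw [heq]
  refine hF.congr_deriv (Eq.symm ?_)
  rw [ffun]
  exact alg2 ρ β γ (gfun β ρ) hρ hβ hγ hg hkey
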